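/- Every Lindelöf Tychonoff space is a μ-space: every functionally bounded subset of a Lindelöf Tychonoff space has compact closure. -/

import Mathlib

open Set Function

private def auxSeq (g : ℕ → ℕ) : ℕ → ℕ
  | 0 => 0
  | n + 1 => max (auxSeq g n + 1) (g (auxSeq g n))

/-- Every Lindelöf Tychonoff space is a μ-space: every functionally bounded subset has
compact closure. -/
theorem stmt_10 {X : Type*} [TopologicalSpace X] [T2Space X] [CompletelyRegularSpace X]
    [LindelofSpace X]
    (A : Set X) (hA : ∀ f : X → ℝ, Continuous f → ∃ C, ∀ x ∈ A, |f x| ≤ C) :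
    IsCompact (closure A) := by
  classical
  by_contra hnc
  have hne : (closure A).Nonempty := by
    by_contra h
    rw [not_nonempty_iff_eq_empty] at h
    exact hnc (h ▸ isCompact_empty)
  have hL : IsLindelof (closure A) := isClosed_closure.isLindelof
  rw [isCompact_iff_finite_subcover] at hnc
  push_neg at hnc
  obtain ⟨ι, U, hUo, hcov, hnofin⟩ := hnc
  have : Nonempty ι := by
    obtain ⟨z, hz⟩ := hne
    obtain ⟨i, -⟩ := mem_iUnion.mp (hcov hz)
    exact ⟨i⟩
  obtain ⟨r, hr⟩ := hL.indexed_countable_subcover U hUo hcov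
  set V : ℕ → Set X := accumulate (fun n => U (r n)) with hV
  have hVo : ∀ n, IsOpen (V n) := fun n =>
    isOpen_biUnion fun i _ => hUo (r i)
  have hVmono : Monotone V := monotone_accumulate
  have hVcov : closure A ⊆ ⋃ n, V n := by rwa [iUnion_accumulate]
  -- no V n contains closure A
  have hnot : ∀ n, ∃ z ∈ closure A, z ∉ V n := by
    intro n
    by_contra h
    push_neg at h
    refine hnofin ((Finset.range (n + 1)).image r) (fun z hz => ?_)
    obtain ⟨m, hm, hzm⟩ := mem_iUnion₂.mp (h z hz)
    exact mem_iUnion₂.mpr ⟨r m, Finset.mem_image_of_mem r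
      (Finset.mem_range.mpr (Nat.lt_succ_of_le hm)), hzm⟩
  choose x hxA hxV using hnot
  have hgx : ∀ n, ∃ m, x n ∈ V m := fun n => mem_iUnion.mp (hVcov (hxA n))
  choose g hg using hgx
  set k : ℕ → ℕ := auxSeq g with hk
  have hkS : ∀ n, k (n + 1) = max (k n + 1) (g (k n)) := fun n => rfl
  have hkmono : StrictMono k := by
    apply strictMono_nat_of_lt_succ
    intro n
    rw [hkS]
    exact lt_of_lt_of_le (Nat.lt_succ_self _) (le_max_left _ _)
  set y : ℕ → X := fun n => x (k n) with hy
  have hyA : ∀ n, y n ∈ closure A := fun n => hxA (k n)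
  have hy2 : ∀ n, y n ∉ V (k n) := fun n => hxV (k n)
  have hy3 : ∀ n, y n ∈ V (k (n + 1)) := by
    intro n
    exact hVmono (le_trans (le_max_right _ _) (hkS n).ge) (hg (k n))
  have hyV : ∀ n m, y n ∈ V m → n < m := by
    intro n m h
    by_contra hle
    push_neg at hle
    exact hy2 n (hVmono (le_trans hle (hkmono.le_apply)) h)
  have hyinj : Function.Injective y := by
    have key : ∀ n m, n < m → y n ≠ y m := by
      intro n m hnm heq
      have h1 : y n ∈ V (k m) := hVmono (hkmono.monotone hnm) (hy3 n)
      exact hy2 m (heq ▸ h1)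
    intro a b hab
    rcases lt_trichotomy a b with h | h | h
    · exact absurd hab (key a b h)
    · exact h
    · exact absurd hab.symm (key b a h)
  set D : Set X := range y with hD
  have hDA : D ⊆ closure A := range_subset_iff.mpr hyA
  have hDVfin : ∀ m, D ∩ V m ⊆ y '' Iio m := by
    rintro m z ⟨⟨n, rfl⟩, hzv⟩
    exact ⟨n, hyV n m hzv, rfl⟩
  have hDclosed : IsClosed D := by
    rw [← closure_subset_iff_isClosed]
    intro z hz
    have hzA : z ∈ closure A := closure_minimal hDA isClosed_closure hz
    obtain ⟨m, hm⟩ := mem_iUnion.mp (hVcov hzA)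
    have h1 : z ∈ closure (V m ∩ D) := (hVo m).inter_closure ⟨hm, hz⟩
    have hfin : (y '' Iio m).Finite := (finite_Iio m).image y
    have h2 : closure (V m ∩ D) ⊆ y '' Iio m := by
      rw [hfin.isClosed.closure_subset_iff]
      intro w hw
      exact hDVfin m ⟨hw.2, hw.1⟩
    obtain ⟨n, -, rfl⟩ := h2 h1
    exact mem_range_self n
  have hDdisc : DiscreteTopology ↥D := by
    rw [discreteTopology_iff_isOpen_singleton]
    rintro ⟨z, hzD⟩
    obtain ⟨n, rfl⟩ := hzD
    rw [isOpen_induced_iff]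
    refine ⟨V (k (n + 1)) \ ((y '' Iio (k (n + 1))) \ {y n}), ?_, ?_⟩
    · exact (hVo _).sdiff ((((finite_Iio _).image y).diff).isClosed)
    · ext ⟨w, hwD⟩
      obtain ⟨m, rfl⟩ := hwD
      simp only [mem_preimage, mem_singleton_iff, Subtype.mk.injEq, Subtype.mk_eq_mk]
      constructor
      · rintro ⟨h1, h2⟩
        have : y m ∈ y '' Iio (k (n + 1)) := ⟨m, hyV m _ h1, rfl⟩
        by_contra hne
        exact h2 ⟨this, fun h' => hne (Subtype.ext h')⟩
      · rintro h
        rw [show y m = y n from congrArg Subtype.val h]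
        exact ⟨hy3 n, fun hc => hc.2 rfl⟩
  -- the unbounded function on D
  let f₀ : C(↥D, ℝ) := ⟨fun d => ((Function.invFun y d.val : ℕ) : ℝ),
    continuous_of_discreteTopology⟩
  obtain ⟨G, hG⟩ := ContinuousMap.exists_restrict_eq hDclosed f₀
  have hGy : ∀ n, G (y n) = n := by
    intro n
    have := congrFun (congrArg DFunLike.coe hG) ⟨y n, mem_range_self n⟩
    simp only [ContinuousMap.restrict_apply] at this
    rw [this]
    simp [f₀, Function.leftInverse_invFun hyinj n]
  obtain ⟨C, hC⟩ := hA G G.continuous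
  have hCcl : ∀ z ∈ closure A, |G z| ≤ C := by
    intro z hz
    have hcl : IsClosed {w : X | |G w| ≤ C} :=
      isClosed_le (continuous_abs.comp G.continuous) continuous_const
    exact closure_minimal hC hcl hz
  obtain ⟨n, hn⟩ := exists_nat_gt C
  have := hCcl (y n) (hyA n)
  rw [hGy n] at this
  have : (n : ℝ) ≤ C := le_trans (le_abs_self _) this
  linarith
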